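/- arXiv:2303.14497 — 2 statements merged into one kernel-verified Lean document; each statement's English description precedes it below -/
import Mathlib

section
/- Assume there exists M > 0 such that for all r ≥ 1: (i) r^{−8} ( ∫_1^r t³χ(t) dt ) ( ∫_1^r t³/χ(t) dt ) ≤ M; (ii) r^{−8} ∫_1^r t³χ(t) dt ≤ M; (iii) (max_{r≤t≤4r} χ(t)) / (min_{r≤t≤4r} χ(t)) ≤ M. Then ω_β belongs to the Muckenhoupt A₂ class on ℝ⁴, i.e. the supremum over all open balls B ⊂ ℝ⁴ of ( |B|^{−1} ∫_B ω_β(x) dx ) ( |B|^{−1} ∫_B ω_β(x)^{−1} dx ) is finite. -/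
open MeasureTheory Real Filter Topology

noncomputable section

abbrev E4 : Type := EuclideanSpace ℝ (Fin 4)

/-- The radial weight `ω_β` on `ℝ⁴`. -/
def omegaB (β : ℝ) (χ : ℝ → ℝ) (x : E4) : ℝ :=
  if ‖x‖ < 1 then (Real.log (Real.exp 1 / ‖x‖)) ^ β else χ ‖x‖

/-- A function on `ℝ⁴` is radial if its value depends only on the norm. -/
def IsRadial (u : E4 → ℝ) : Prop := ∀ x y : E4, ‖x‖ = ‖y‖ → u x = u y

/-- The Laplacian of a function on `ℝ⁴`. -/
def lap (f : E4 → ℝ) (x : E4) : ℝ :=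
  ∑ i : Fin 4, fderiv ℝ (fun y => fderiv ℝ f y (EuclideanSpace.single i 1)) x
    (EuclideanSpace.single i 1)

/-- `v` is a weak Laplacian of `u`. -/
def IsWeakLap (u v : E4 → ℝ) : Prop :=
  LocallyIntegrable v volume ∧
  ∀ φ : E4 → ℝ, ContDiff ℝ (⊤ : ℕ∞) φ → HasCompactSupport φ →
    ∫ x, u x * lap φ x = ∫ x, v x * φ x

/-- Membership in the weighted space `X_β` (with weak Laplacian `v`). -/
def MemX (β : ℝ) (χ : ℝ → ℝ) (u v : E4 → ℝ) : Prop :=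
  IsRadial u ∧ MemLp u (ENNReal.ofReal (2 / (1 - β))) volume ∧
  IsWeakLap u v ∧ Integrable (fun x => omegaB β χ x * (v x) ^ 2) volume

/-- `‖u‖_β`, expressed through the weak Laplacian `v` of `u`. -/
def normB (β : ℝ) (χ : ℝ → ℝ) (v : E4 → ℝ) : ℝ :=
  Real.sqrt (∫ x, omegaB β χ x * (v x) ^ 2)

/-- The critical constant `α_β`. -/
def alphaB (β : ℝ) : ℝ := 4 * (8 * π ^ 2 * (1 - β)) ^ ((1 : ℝ) / (1 - β))

/-- Standing hypotheses on `χ`. -/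
def ChiHyp (χ : ℝ → ℝ) : Prop :=
  ContinuousOn χ (Set.Ici 1) ∧ χ 1 = 1 ∧ (∀ t, 1 ≤ t → 0 < χ t) ∧
  ∃ c > 0, ∀ t, 1 ≤ t → c ≤ χ t

/-- Condition (D1). -/
def CondD1 (β : ℝ) (χ : ℝ → ℝ) : Prop :=
  ∃ C > 0, ∀ k : ℕ, 1 ≤ k →
    (∫ r in Set.Ioi (1 : ℝ),
      r ^ 3 * (∫ y in Set.Ioi r, 1 / (χ y * y)) ^ ((k : ℝ) / (1 - β))) ≤ C ^ k

/-- Condition (D2). -/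
def CondD2 (β : ℝ) (χ : ℝ → ℝ) : Prop :=
  ∃ C > 0, ∀ k : ℕ, 1 ≤ k →
    (∫ r in Set.Ioi (1 : ℝ),
      r ^ ((3 : ℝ) - 2 * k / (1 - β)) *
        (∫ y in Set.Ioc (1 : ℝ) r, y / χ y) ^ ((k : ℝ) / (1 - β))) ≤ C ^ k

/-- `F(s) = ∫₀^s f(t) dt`. -/
def Ffun (f : ℝ → ℝ) (s : ℝ) : ℝ := ∫ t in (0 : ℝ)..s, f t

/-- The energy functional `I_β`, expressed through the weak Laplacian `v` of `u`. -/
def Ibeta (β : ℝ) (χ : ℝ → ℝ) (f : ℝ → ℝ) (u v : E4 → ℝ) : ℝ :=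
  (1 / 2) * (∫ x, omegaB β χ x * (v x) ^ 2) - ∫ x, Ffun f (u x)

/-- Standing hypotheses on `f`. -/
def FHyp (f : ℝ → ℝ) : Prop :=
  Continuous f ∧ (∀ s ≤ 0, f s = 0) ∧ ∀ s, 0 ≤ f s

/-- Condition (F1). -/
def CondF1 (β c₀ p q α : ℝ) (f : ℝ → ℝ) : Prop :=
  0 < c₀ ∧ 2 / (1 - β) < p ∧ 2 / (1 - β) < q ∧ 0 < α ∧
  ∀ s : ℝ, |f s| ≤
    c₀ * (|s| ^ (p - 1) + |s| ^ (q - 1) * (Real.exp (α * |s| ^ (2 / (1 - β))) - 1))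

/-- Condition (F2). -/
def CondF2 (f : ℝ → ℝ) : Prop :=
  ∃ M₀ > 0, ∃ s₀ > 0, ∀ s ≥ s₀, Ffun f s ≤ M₀ * f s

/-- Condition (F3): `liminf_{s→∞} f(s) s e^{-α s^{2/(1-β)}} ≥ κ` for some admissible `κ`. -/
def CondF3 (β α : ℝ) (f : ℝ → ℝ) : Prop :=
  ∃ κ : ℝ, (2 / (π ^ 2 * Real.exp 1 ^ 4)) * (alphaB β / α) ^ (1 - β) < κ ∧
    ∀ ε > 0, ∃ s₁ : ℝ, ∀ s ≥ s₁, κ - ε ≤ f s * s * Real.exp (-(α * s ^ (2 / (1 - β))))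

/-- A `(PS)_m` sequence for `I_β` (with Laplacians `W n` of `U n`). -/
def IsPSSeq (β : ℝ) (χ f : ℝ → ℝ) (m : ℝ) (U W : ℕ → E4 → ℝ) : Prop :=
  (∀ n, MemX β χ (U n) (W n)) ∧
  Tendsto (fun n => Ibeta β χ f (U n) (W n)) atTop (nhds m) ∧
  ∃ δ : ℕ → ℝ, Tendsto δ atTop (nhds 0) ∧
    ∀ n, ∀ v w : E4 → ℝ, MemX β χ v w → (∫ x, omegaB β χ x * (w x) ^ 2) ≤ 1 →
      |(∫ x, omegaB β χ x * W n x * w x) - ∫ x, f (U n x) * v x| ≤ δ n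

open scoped ENNReal NNReal

open Measure Set Metric in
lemma lintegral_norm_E4 (f : ℝ → ℝ≥0∞) (hf : Measurable f) :
    ∫⁻ x : E4, f ‖x‖ = 4 * volume (Metric.ball (0:E4) 1) *
      ∫⁻ y in Set.Ioi (0:ℝ), ENNReal.ofReal (y ^ 3) * f y := by
  have hdim : Module.finrank ℝ E4 = 4 := finrank_euclideanSpace_fin
  have h1 : ∫⁻ x : E4, f ‖x‖ = ∫⁻ x in ({(0:E4)}ᶜ : Set E4), f ‖x‖ := by
    rw [restrict_compl_singleton]
  rw [h1, ← lintegral_subtype_comap (measurableSet_singleton (0:E4)).compl]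
  have hmp := (volume.measurePreserving_homeomorphUnitSphereProd (E := E4))
  have hfm : Measurable fun p : sphere (0:E4) 1 × Ioi (0:ℝ) => f p.2 :=
    hf.comp (measurable_subtype_coe.comp measurable_snd)
  have h2 := hmp.lintegral_comp hfm
  have h3 : ∀ x : ({(0:E4)}ᶜ : Set E4),
      f ((homeomorphUnitSphereProd E4 x).2 : ℝ) = f ‖(x : E4)‖ := by
    intro x; simp
  calc ∫⁻ x : ({(0:E4)}ᶜ : Set E4), f ‖(x : E4)‖ ∂(volume.comap Subtype.val)
      = ∫⁻ x : ({(0:E4)}ᶜ : Set E4), f ((homeomorphUnitSphereProd E4 x).2 : ℝ)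
        ∂(volume.comap Subtype.val) := by
        refine lintegral_congr fun x => ?_
        rw [h3]
    _ = ∫⁻ p : sphere (0:E4) 1 × Ioi (0:ℝ), f p.2
        ∂((volume : Measure E4).toSphere.prod (volumeIoiPow (Module.finrank ℝ E4 - 1))) := h2
    _ = 4 * volume (Metric.ball (0:E4) 1) * ∫⁻ y in Set.Ioi (0:ℝ), ENNReal.ofReal (y ^ 3) * f y := by
        rw [lintegral_prod _ hfm.aemeasurable]
        have hcoe : Measurable fun y : Ioi (0:ℝ) => f y :=
          hf.comp measurable_subtype_coe
        have hpow : Measurable fun y : Ioi (0:ℝ) => ENNReal.ofReal (y.1 ^ 3) :=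
          (measurable_subtype_coe.pow_const _).ennreal_ofReal
        have hinner : ∫⁻ y : Ioi (0:ℝ), f y ∂(Measure.volumeIoiPow (Module.finrank ℝ E4 - 1))
            = ∫⁻ y in Set.Ioi (0:ℝ), ENNReal.ofReal (y ^ 3) * f y := by
          rw [hdim]
          show ∫⁻ y : Ioi (0:ℝ), f y ∂(Measure.volumeIoiPow 3) = _
          rw [Measure.volumeIoiPow, lintegral_withDensity_eq_lintegral_mul _ hpow hcoe,
            ← lintegral_subtype_comap measurableSet_Ioi (fun y => ENNReal.ofReal (y ^ 3) * f y)]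
          rfl
        simp only [lintegral_const, hinner]
        rw [Measure.toSphere_apply_univ, hdim]
        ring

/-- Radial profile of `omegaB`, made globally defined. -/
def prof (β : ℝ) (χ : ℝ → ℝ) (t : ℝ) : ℝ :=
  if t < 1 then (Real.log (Real.exp 1 / t)) ^ β else χ (max t 1)

lemma omegaB_eq_prof (β : ℝ) (χ : ℝ → ℝ) (x : E4) : omegaB β χ x = prof β χ ‖x‖ := by
  unfold omegaB prof
  by_cases h : ‖x‖ < 1
  · simp [h]
  · simp [h, max_eq_left (not_lt.1 h)]

lemma measurable_prof (β : ℝ) {χ : ℝ → ℝ} (hχc : ContinuousOn χ (Set.Ici 1)) :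
    Measurable (prof β χ) := by
  unfold prof
  refine Measurable.ite measurableSet_Iio ?_ ?_
  · exact (Real.measurable_log.comp (measurable_const.div measurable_id)).pow measurable_const
  · refine Continuous.measurable ?_
    exact hχc.comp_continuous (continuous_id.max continuous_const)
      (fun t => Set.mem_Ici.2 (le_max_right _ _))

lemma one_le_log_div {t : ℝ} (h0 : 0 < t) (h1 : t ≤ 1) : 1 ≤ Real.log (Real.exp 1 / t) := by
  have : Real.exp 1 ≤ Real.exp 1 / t := by
    rw [le_div_iff₀ h0]
    nlinarith [Real.exp_pos 1]
  calc (1:ℝ) = Real.log (Real.exp 1) := (Real.log_exp 1).symm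
    _ ≤ _ := Real.log_le_log (Real.exp_pos 1) this

lemma log_div_mono {s t : ℝ} (h0 : 0 < s) (hst : s ≤ t) :
    Real.log (Real.exp 1 / t) ≤ Real.log (Real.exp 1 / s) := by
  apply Real.log_le_log (div_pos (Real.exp_pos 1) (h0.trans_le hst))
  exact div_le_div_of_nonneg_left (Real.exp_pos 1).le h0 hst

/-- Key pointwise bound: for `0 < y < R ≤ 1`, `(log(e/y))^β ≤ (log(e/R))^β * (R/y)`. -/
lemma log_rpow_le {β y R : ℝ} (hβ0 : 0 ≤ β) (hβ1 : β ≤ 1) (h0 : 0 < y) (hyR : y < R)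
    (hR : R ≤ 1) :
    (Real.log (Real.exp 1 / y)) ^ β ≤ (Real.log (Real.exp 1 / R)) ^ β * (R / y) := by
  set L := Real.log (Real.exp 1 / R) with hL
  have hL1 : 1 ≤ L := one_le_log_div (h0.trans hyR) hR
  have hu1 : 1 ≤ R / y := (one_le_div h0).2 hyR.le
  have hR0 : 0 < R := h0.trans hyR
  have hsplit : Real.log (Real.exp 1 / y) = L + Real.log (R / y) := by
    rw [hL, ← Real.log_mul (ne_of_gt (div_pos (Real.exp_pos 1) hR0)) (ne_of_gt (div_pos hR0 h0))]
    congr 1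
    field_simp
  have hlogu : Real.log (R / y) ≤ R / y - 1 := Real.log_le_sub_one_of_pos (by positivity)
  have h2 : Real.log (Real.exp 1 / y) ≤ L * (1 + Real.log (R / y)) := by
    have hlog0 : 0 ≤ Real.log (R / y) := Real.log_nonneg hu1
    nlinarith
  calc (Real.log (Real.exp 1 / y)) ^ β ≤ (L * (1 + Real.log (R / y))) ^ β := by
        apply Real.rpow_le_rpow _ h2 hβ0
        have := one_le_log_div h0 (hyR.le.trans hR)
        linarith
    _ = L ^ β * (1 + Real.log (R / y)) ^ β := Real.mul_rpow (by linarith) (by nlinarith [Real.log_nonneg hu1])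
    _ ≤ L ^ β * (1 + Real.log (R / y)) := by
        have h1u : 1 ≤ 1 + Real.log (R / y) := by nlinarith [Real.log_nonneg hu1]
        have : (1 + Real.log (R / y)) ^ β ≤ (1 + Real.log (R / y)) ^ (1:ℝ) :=
          Real.rpow_le_rpow_of_exponent_le h1u hβ1
        rw [Real.rpow_one] at this
        have hLb : 0 ≤ L ^ β := Real.rpow_nonneg (by linarith) β
        nlinarith
    _ ≤ L ^ β * (R / y) := by
        have h3 : 1 + Real.log (R / y) ≤ R / y := by linarith
        have hLb : 0 ≤ L ^ β := Real.rpow_nonneg (by linarith) β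
        nlinarith

open Measure Set Metric in
lemma lintegral_ball_eq (q : ℝ → ℝ) (hq : Measurable q) (R : ℝ) :
    ∫⁻ x in Metric.ball (0:E4) R, ENNReal.ofReal (q ‖x‖) =
      4 * volume (Metric.ball (0:E4) 1) *
        ∫⁻ y in Set.Ioo 0 R, ENNReal.ofReal (y ^ 3) * ENNReal.ofReal (q y) := by
  set f : ℝ → ℝ≥0∞ := fun y => Set.indicator (Set.Iio R) (fun y => ENNReal.ofReal (q y)) y
    with hf
  have hfm : Measurable f := (hq.ennreal_ofReal).indicator measurableSet_Iio
  have h1 : ∫⁻ x in Metric.ball (0:E4) R, ENNReal.ofReal (q ‖x‖) = ∫⁻ x : E4, f ‖x‖ := by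
    rw [← lintegral_indicator measurableSet_ball]
    refine lintegral_congr fun x => ?_
    show (Metric.ball (0:E4) R).indicator (fun x => ENNReal.ofReal (q ‖x‖)) x
      = (Iio R).indicator (fun y => ENNReal.ofReal (q y)) ‖x‖
    by_cases h : x ∈ Metric.ball (0:E4) R
    · rw [Set.indicator_of_mem h,
        Set.indicator_of_mem (show ‖x‖ ∈ Iio R from mem_ball_zero_iff.1 h)]
    · rw [Set.indicator_of_notMem h,
        Set.indicator_of_notMem (fun hc : ‖x‖ ∈ Iio R => h (mem_ball_zero_iff.2 hc))]
  rw [h1, lintegral_norm_E4 f hfm]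
  congr 1
  have h2 : ∀ y : ℝ, ENNReal.ofReal (y ^ 3) * f y
      = Set.indicator (Set.Iio R) (fun y => ENNReal.ofReal (y ^ 3) * ENNReal.ofReal (q y)) y := by
    intro y
    by_cases h : y ∈ Set.Iio R
    · rw [hf]; simp only [Set.indicator_of_mem h]
    · rw [hf]; simp only [Set.indicator_of_notMem h, mul_zero]
  calc ∫⁻ y in Set.Ioi (0:ℝ), ENNReal.ofReal (y ^ 3) * f y
      = ∫⁻ y in Set.Ioi (0:ℝ),
          Set.indicator (Set.Iio R) (fun y => ENNReal.ofReal (y ^ 3) * ENNReal.ofReal (q y)) y := by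
        exact lintegral_congr fun y => by rw [h2]
    _ = ∫⁻ y in Set.Iio R, (fun y => ENNReal.ofReal (y ^ 3) * ENNReal.ofReal (q y)) y
          ∂(volume.restrict (Set.Ioi 0)) := lintegral_indicator measurableSet_Iio _
    _ = ∫⁻ y in Set.Ioo 0 R, ENNReal.ofReal (y ^ 3) * ENNReal.ofReal (q y) := by
        rw [Measure.restrict_restrict measurableSet_Iio]
        congr 1
        rw [Set.inter_comm, Set.Ioi_inter_Iio]

lemma prof_small_le {β : ℝ} {χ : ℝ → ℝ} (hβ0 : 0 ≤ β) (hβ1 : β ≤ 1) {y R : ℝ}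
    (h0 : 0 < y) (hyR : y < R) (hR : R ≤ 1) :
    prof β χ y ≤ (Real.log (Real.exp 1 / R)) ^ β * (R / y) := by
  have hy1 : y < 1 := hyR.trans_le hR
  rw [prof, if_pos hy1]
  exact log_rpow_le hβ0 hβ1 h0 hyR hR

lemma prof_small_ge {β : ℝ} {χ : ℝ → ℝ} (hβ0 : 0 ≤ β) {y R : ℝ}
    (h0 : 0 < y) (hyR : y < R) (hR : R ≤ 1) :
    (Real.log (Real.exp 1 / R)) ^ β ≤ prof β χ y := by
  have hy1 : y < 1 := hyR.trans_le hR
  rw [prof, if_pos hy1]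
  exact Real.rpow_le_rpow
    (Real.log_nonneg (by
      rw [le_div_iff₀ (h0.trans hyR)]
      nlinarith [Real.exp_one_gt_d9]))
    (log_div_mono h0 hyR.le) hβ0

open Measure Set Metric in
lemma centered_bounds {β : ℝ} {χ : ℝ → ℝ} {c M : ℝ} (hβ0 : 0 < β) (hβ1 : β < 1)
    (hχc : ContinuousOn χ (Set.Ici 1)) (hχpos : ∀ t, 1 ≤ t → 0 < χ t)
    (hc : 0 < c) (hcle : ∀ t, 1 ≤ t → c ≤ χ t) (hM : 0 < M)
    (h1 : ∀ r : ℝ, 1 ≤ r → ((∫ t in Set.Ioc (1:ℝ) r, t ^ 3 * χ t) *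
        (∫ t in Set.Ioc (1:ℝ) r, t ^ 3 / χ t)) / r ^ 8 ≤ M)
    (h2 : ∀ r : ℝ, 1 ≤ r → (∫ t in Set.Ioc (1:ℝ) r, t ^ 3 * χ t) / r ^ 8 ≤ M)
    {R : ℝ} (hR : 0 < R) :
    (∫⁻ x in Metric.ball (0:E4) R, ENNReal.ofReal (omegaB β χ x)) *
      (∫⁻ x in Metric.ball (0:E4) R, ENNReal.ofReal ((omegaB β χ x)⁻¹)) ≤
      (4 * volume (Metric.ball (0:E4) 1)) ^ 2 * ENNReal.ofReal ((1 + 1/c + 2*M) * R ^ 8) ∧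
    (∫⁻ x in Metric.ball (0:E4) R, ENNReal.ofReal (omegaB β χ x)) ≠ ⊤ ∧
    (∫⁻ x in Metric.ball (0:E4) R, ENNReal.ofReal ((omegaB β χ x)⁻¹)) ≠ ⊤ := by
  have hpm : Measurable (prof β χ) := measurable_prof β hχc
  have hqm : Measurable (fun y => (prof β χ y)⁻¹) := hpm.inv
  have hv : volume (Metric.ball (0:E4) 1) ≠ ⊤ := measure_ball_lt_top.ne
  have e1 : (∫⁻ x in Metric.ball (0:E4) R, ENNReal.ofReal (omegaB β χ x)) =
      4 * volume (Metric.ball (0:E4) 1) *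
        ∫⁻ y in Set.Ioo 0 R, ENNReal.ofReal (y ^ 3) * ENNReal.ofReal (prof β χ y) := by
    simp only [omegaB_eq_prof]
    exact lintegral_ball_eq _ hpm R
  have e2 : (∫⁻ x in Metric.ball (0:E4) R, ENNReal.ofReal ((omegaB β χ x)⁻¹)) =
      4 * volume (Metric.ball (0:E4) 1) *
        ∫⁻ y in Set.Ioo 0 R, ENNReal.ofReal (y ^ 3) * ENNReal.ofReal ((prof β χ y)⁻¹) := by
    simp only [omegaB_eq_prof]
    exact lintegral_ball_eq _ hqm R
  -- small-scale one-dimensional bounds, for any 0 < R' ≤ 1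
  have smallJ : ∀ R' : ℝ, 0 < R' → R' ≤ 1 →
      (∫⁻ y in Set.Ioo 0 R', ENNReal.ofReal (y ^ 3) * ENNReal.ofReal (prof β χ y)) ≤
        ENNReal.ofReal ((Real.log (Real.exp 1 / R')) ^ β * R' ^ 4) := by
    intro R' hR'0 hR'1
    set L : ℝ := (Real.log (Real.exp 1 / R')) ^ β with hL
    have hLpos : 0 < L := Real.rpow_pos_of_pos (by
      have := one_le_log_div hR'0 hR'1; linarith) β
    calc (∫⁻ y in Set.Ioo 0 R', ENNReal.ofReal (y ^ 3) * ENNReal.ofReal (prof β χ y))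
        ≤ ∫⁻ _ in Set.Ioo 0 R', ENNReal.ofReal (L * R' ^ 3) := by
          refine setLIntegral_mono' measurableSet_Ioo fun y hy => ?_
          have hy0 : 0 < y := hy.1
          have hyR' : y < R' := hy.2
          rw [← ENNReal.ofReal_mul (by positivity)]
          apply ENNReal.ofReal_le_ofReal
          have hb := prof_small_le (χ := χ) hβ0.le hβ1.le hy.1 hy.2 hR'1
          have h' : y ^ 3 * prof β χ y ≤ y ^ 3 * (L * (R' / y)) := by
            apply mul_le_mul_of_nonneg_left hb (by positivity)
          have hsq : y ^ 2 ≤ R' ^ 2 := by nlinarith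
          calc y ^ 3 * prof β χ y ≤ y ^ 3 * (L * (R' / y)) := h'
            _ = L * (R' * y ^ 2) := by field_simp
            _ ≤ L * R' ^ 3 := by nlinarith [mul_nonneg hLpos.le hR'0.le]
      _ = ENNReal.ofReal (L * R' ^ 3) * ENNReal.ofReal R' := by
          rw [setLIntegral_const, Real.volume_Ioo, sub_zero]
      _ ≤ ENNReal.ofReal (L * R' ^ 4) := by
          rw [← ENNReal.ofReal_mul (by positivity)]
          apply ENNReal.ofReal_le_ofReal
          nlinarith
  have smallK : ∀ R' : ℝ, 0 < R' → R' ≤ 1 →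
      (∫⁻ y in Set.Ioo 0 R', ENNReal.ofReal (y ^ 3) * ENNReal.ofReal ((prof β χ y)⁻¹)) ≤
        ENNReal.ofReal (((Real.log (Real.exp 1 / R')) ^ β)⁻¹ * R' ^ 4) := by
    intro R' hR'0 hR'1
    set L : ℝ := (Real.log (Real.exp 1 / R')) ^ β with hL
    have hLpos : 0 < L := Real.rpow_pos_of_pos (by
      have := one_le_log_div hR'0 hR'1; linarith) β
    calc (∫⁻ y in Set.Ioo 0 R', ENNReal.ofReal (y ^ 3) * ENNReal.ofReal ((prof β χ y)⁻¹))
        ≤ ∫⁻ _ in Set.Ioo 0 R', ENNReal.ofReal (L⁻¹ * R' ^ 3) := by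
          refine setLIntegral_mono' measurableSet_Ioo fun y hy => ?_
          have hy0 : 0 < y := hy.1
          have hy1 : y < R' := hy.2
          rw [← ENNReal.ofReal_mul (by positivity)]
          apply ENNReal.ofReal_le_ofReal
          have hb := prof_small_ge (χ := χ) (β := β) hβ0.le hy.1 hy.2 hR'1
          have hinv : (prof β χ y)⁻¹ ≤ L⁻¹ := by
            apply inv_anti₀ hLpos hb
          have hcube : y ^ 3 ≤ R' ^ 3 := pow_le_pow_left₀ hy0.le hy1.le 3
          calc y ^ 3 * (prof β χ y)⁻¹ ≤ y ^ 3 * L⁻¹ :=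
                mul_le_mul_of_nonneg_left hinv (by positivity)
            _ ≤ R' ^ 3 * L⁻¹ := by nlinarith [inv_nonneg.2 hLpos.le]
            _ = L⁻¹ * R' ^ 3 := by ring
      _ = ENNReal.ofReal (L⁻¹ * R' ^ 3) * ENNReal.ofReal R' := by
          rw [setLIntegral_const, Real.volume_Ioo, sub_zero]
      _ ≤ ENNReal.ofReal (L⁻¹ * R' ^ 4) := by
          rw [← ENNReal.ofReal_mul (by positivity)]
          apply ENNReal.ofReal_le_ofReal
          nlinarith [inv_nonneg.2 hLpos.le]
  set v := volume (Metric.ball (0:E4) 1) with hv'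
  set J := ∫⁻ y in Set.Ioo (0:ℝ) R, ENNReal.ofReal (y ^ 3) * ENNReal.ofReal (prof β χ y) with hJ
  set K := ∫⁻ y in Set.Ioo (0:ℝ) R, ENNReal.ofReal (y ^ 3) * ENNReal.ofReal ((prof β χ y)⁻¹)
    with hK
  have key : J * K ≤ ENNReal.ofReal ((1 + 1/c + 2*M) * R ^ 8) ∧ J ≠ ⊤ ∧ K ≠ ⊤ := by
    by_cases hR1 : R ≤ 1
    · have hJ' := smallJ R hR hR1
      have hK' := smallK R hR hR1
      refine ⟨?_, ne_top_of_le_ne_top ENNReal.ofReal_ne_top hJ',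
        ne_top_of_le_ne_top ENNReal.ofReal_ne_top hK'⟩
      have hL1 : 1 ≤ Real.log (Real.exp 1 / R) := one_le_log_div hR hR1
      have hLpos : 0 < (Real.log (Real.exp 1 / R)) ^ β :=
        Real.rpow_pos_of_pos (by linarith) β
      calc J * K ≤ ENNReal.ofReal ((Real.log (Real.exp 1 / R)) ^ β * R ^ 4) *
            ENNReal.ofReal (((Real.log (Real.exp 1 / R)) ^ β)⁻¹ * R ^ 4) := mul_le_mul' hJ' hK'
        _ = ENNReal.ofReal (((Real.log (Real.exp 1 / R)) ^ β * R ^ 4) *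
            (((Real.log (Real.exp 1 / R)) ^ β)⁻¹ * R ^ 4)) :=
            (ENNReal.ofReal_mul (by positivity)).symm
        _ ≤ ENNReal.ofReal ((1 + 1/c + 2*M) * R ^ 8) := by
            apply ENNReal.ofReal_le_ofReal
            have hid : ((Real.log (Real.exp 1 / R)) ^ β * R ^ 4) *
                (((Real.log (Real.exp 1 / R)) ^ β)⁻¹ * R ^ 4)
                = ((Real.log (Real.exp 1 / R)) ^ β * ((Real.log (Real.exp 1 / R)) ^ β)⁻¹)
                  * R ^ 8 := by ring
            rw [hid, mul_inv_cancel₀ (ne_of_gt hLpos), one_mul]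
            have h8 : (0:ℝ) ≤ R ^ 8 := by positivity
            have h1c : (0:ℝ) ≤ 1/c := by positivity
            nlinarith
    · push_neg at hR1
      have hsplit : Set.Ioo (0:ℝ) R = Set.Ioo 0 1 ∪ Set.Ico 1 R :=
        (Set.Ioo_union_Ico_eq_Ioo zero_lt_one hR1.le).symm
      have hdisj : Disjoint (Set.Ioo (0:ℝ) 1) (Set.Ico 1 R) :=
        Set.disjoint_left.2 fun x hx hx' => absurd hx.2 (not_lt.2 hx'.1)
      set Bw := ∫ t in Set.Ioc (1:ℝ) R, t ^ 3 * χ t with hBw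
      set Bi := ∫ t in Set.Ioc (1:ℝ) R, t ^ 3 / χ t with hBi
      have hIw : IntegrableOn (fun t => t ^ 3 * χ t) (Set.Ioc 1 R) := by
        have hco : ContinuousOn (fun t : ℝ => t ^ 3 * χ t) (Set.Icc 1 R) :=
          (continuous_pow 3).continuousOn.mul (hχc.mono (fun t ht => ht.1))
        exact (hco.integrableOn_Icc).mono_set Set.Ioc_subset_Icc_self
      have hIi : IntegrableOn (fun t => t ^ 3 / χ t) (Set.Ioc 1 R) := by
        have hco : ContinuousOn (fun t : ℝ => t ^ 3 / χ t) (Set.Icc 1 R) :=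
          (continuous_pow 3).continuousOn.div (hχc.mono (fun t ht => ht.1))
            (fun t ht => ne_of_gt (hχpos t ht.1))
        exact (hco.integrableOn_Icc).mono_set Set.Ioc_subset_Icc_self
      have hBweq : (∫⁻ y in Set.Ico (1:ℝ) R, ENNReal.ofReal (y ^ 3) *
          ENNReal.ofReal (prof β χ y)) = ENNReal.ofReal Bw := by
        have e : (∫⁻ y in Set.Ico (1:ℝ) R, ENNReal.ofReal (y ^ 3) * ENNReal.ofReal (prof β χ y))
            = ∫⁻ y in Set.Ico (1:ℝ) R, ENNReal.ofReal (y ^ 3 * χ y) := by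
          refine setLIntegral_congr_fun measurableSet_Ico (fun y hy => ?_)
          have hy1 : (1:ℝ) ≤ y := hy.1
          rw [prof, if_neg (not_lt.2 hy1), max_eq_left hy1,
            ← ENNReal.ofReal_mul (pow_nonneg (by linarith) 3)]
        rw [e, setLIntegral_congr (Ico_ae_eq_Ioc (a := (1:ℝ)) (b := R)),
          ← ofReal_integral_eq_lintegral_ofReal hIw ?_]
        filter_upwards [ae_restrict_mem measurableSet_Ioc] with t ht
        have ht1 : (1:ℝ) ≤ t := ht.1.le
        exact mul_nonneg (by positivity) (hχpos t ht1).le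
      have hBieq : (∫⁻ y in Set.Ico (1:ℝ) R, ENNReal.ofReal (y ^ 3) *
          ENNReal.ofReal ((prof β χ y)⁻¹)) = ENNReal.ofReal Bi := by
        have e : (∫⁻ y in Set.Ico (1:ℝ) R,
              ENNReal.ofReal (y ^ 3) * ENNReal.ofReal ((prof β χ y)⁻¹))
            = ∫⁻ y in Set.Ico (1:ℝ) R, ENNReal.ofReal (y ^ 3 / χ y) := by
          refine setLIntegral_congr_fun measurableSet_Ico (fun y hy => ?_)
          have hy1 : (1:ℝ) ≤ y := hy.1
          rw [prof, if_neg (not_lt.2 hy1), max_eq_left hy1,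
            ← ENNReal.ofReal_mul (pow_nonneg (by linarith) 3), div_eq_mul_inv]
        rw [e, setLIntegral_congr (Ico_ae_eq_Ioc (a := (1:ℝ)) (b := R)),
          ← ofReal_integral_eq_lintegral_ofReal hIi ?_]
        filter_upwards [ae_restrict_mem measurableSet_Ioc] with t ht
        have ht1 : (1:ℝ) ≤ t := ht.1.le
        exact div_nonneg (by positivity) (hχpos t ht1).le
      have hJle : J ≤ ENNReal.ofReal (1 + Bw) := by
        rw [hJ, hsplit, lintegral_union measurableSet_Ico hdisj, hBweq]
        have h01 : (∫⁻ y in Set.Ioo (0:ℝ) 1, ENNReal.ofReal (y ^ 3) *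
            ENNReal.ofReal (prof β χ y)) ≤ ENNReal.ofReal 1 := by
          have := smallJ 1 one_pos le_rfl
          simpa using this
        have hBw0 : 0 ≤ Bw := setIntegral_nonneg measurableSet_Ioc fun t ht =>
          mul_nonneg (pow_nonneg (by linarith [ht.1.le]) 3) (hχpos t ht.1.le).le
        calc _ ≤ ENNReal.ofReal 1 + ENNReal.ofReal Bw := add_le_add h01 le_rfl
          _ = ENNReal.ofReal (1 + Bw) := (ENNReal.ofReal_add zero_le_one hBw0).symm
      have hKle : K ≤ ENNReal.ofReal (1 + Bi) := by
        rw [hK, hsplit, lintegral_union measurableSet_Ico hdisj, hBieq]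
        have h01 : (∫⁻ y in Set.Ioo (0:ℝ) 1, ENNReal.ofReal (y ^ 3) *
            ENNReal.ofReal ((prof β χ y)⁻¹)) ≤ ENNReal.ofReal 1 := by
          have := smallK 1 one_pos le_rfl
          simpa using this
        have hBi0 : 0 ≤ Bi := setIntegral_nonneg measurableSet_Ioc fun t ht =>
          div_nonneg (pow_nonneg (by linarith [ht.1.le]) 3) (hχpos t ht.1.le).le
        calc _ ≤ ENNReal.ofReal 1 + ENNReal.ofReal Bi := add_le_add h01 le_rfl
          _ = ENNReal.ofReal (1 + Bi) := (ENNReal.ofReal_add zero_le_one hBi0).symm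
      refine ⟨?_, ne_top_of_le_ne_top ENNReal.ofReal_ne_top hJle,
        ne_top_of_le_ne_top ENNReal.ofReal_ne_top hKle⟩
      -- real arithmetic
      have hR8 : (0:ℝ) < R ^ 8 := by positivity
      have hBwle : Bw ≤ M * R ^ 8 := by
        have := h2 R hR1.le
        rw [div_le_iff₀ hR8] at this
        linarith
      have hprod : Bw * Bi ≤ M * R ^ 8 := by
        have := h1 R hR1.le
        rw [div_le_iff₀ hR8] at this
        linarith
      have hBw0 : 0 ≤ Bw := setIntegral_nonneg measurableSet_Ioc fun t ht =>
        mul_nonneg (pow_nonneg (by linarith [ht.1.le]) 3) (hχpos t ht.1.le).le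
      have hBi0 : 0 ≤ Bi := setIntegral_nonneg measurableSet_Ioc fun t ht =>
        div_nonneg (pow_nonneg (by linarith [ht.1.le]) 3) (hχpos t ht.1.le).le
      have hBile : Bi ≤ R ^ 8 / c := by
        have hpt : ∀ t ∈ Set.Ioc (1:ℝ) R, ‖t ^ 3 / χ t‖ ≤ R ^ 3 / c := by
          intro t ht
          have ht1 : (1:ℝ) ≤ t := ht.1.le
          rw [Real.norm_eq_abs, abs_of_nonneg (div_nonneg (pow_nonneg (by linarith) 3) (hχpos t ht1).le)]
          exact div_le_div₀ (by positivity) (pow_le_pow_left₀ (by linarith) ht.2 3) hc (hcle t ht1)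
        have hvol : volume (Set.Ioc (1:ℝ) R) < ⊤ := by
          rw [Real.volume_Ioc]; exact ENNReal.ofReal_lt_top
        have habs := norm_setIntegral_le_of_norm_le_const hvol hpt
        rw [measureReal_def, Real.volume_Ioc, ENNReal.toReal_ofReal (by linarith)] at habs
        have hBib : Bi ≤ (R ^ 3 / c) * (R - 1) := by
          calc Bi ≤ ‖Bi‖ := le_abs_self _
            _ ≤ _ := habs
        have hRc : (0:ℝ) ≤ R ^ 3 / c := by positivity
        have h48 : R ^ 4 ≤ R ^ 8 := pow_le_pow_right₀ (by linarith) (by norm_num)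
        have hstep : (R ^ 3 / c) * (R - 1) ≤ R ^ 4 / c := by
          have h' : (R ^ 3 / c) * (R - 1) ≤ (R ^ 3 / c) * R := by nlinarith
          calc (R ^ 3 / c) * (R - 1) ≤ (R ^ 3 / c) * R := h'
            _ = R ^ 4 / c := by ring
        have h48c : R ^ 4 / c ≤ R ^ 8 / c := (div_le_div_iff_of_pos_right hc).2 h48
        linarith
      calc J * K ≤ ENNReal.ofReal (1 + Bw) * ENNReal.ofReal (1 + Bi) := mul_le_mul' hJle hKle
        _ = ENNReal.ofReal ((1 + Bw) * (1 + Bi)) := (ENNReal.ofReal_mul (by linarith)).symm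
        _ ≤ ENNReal.ofReal ((1 + 1/c + 2*M) * R ^ 8) := by
            apply ENNReal.ofReal_le_ofReal
            have h18 : (1:ℝ) ≤ R ^ 8 := by
              calc (1:ℝ) = 1 ^ 8 := by norm_num
                _ ≤ R ^ 8 := pow_le_pow_left₀ (by norm_num) hR1.le 8
            have hexp : (1 + Bw) * (1 + Bi) = 1 + Bw + Bi + Bw * Bi := by ring
            have hexp2 : (1 + 1/c + 2*M) * R ^ 8 = R ^ 8 + R ^ 8 / c + (M * R ^ 8 + M * R ^ 8) := by
              ring
            rw [hexp, hexp2]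
            linarith [hprod, hBwle, hBile, h18]
  rw [e1, e2]
  refine ⟨?_, ENNReal.mul_ne_top (ENNReal.mul_ne_top (by simp) hv) key.2.1,
    ENNReal.mul_ne_top (ENNReal.mul_ne_top (by simp) hv) key.2.2⟩
  calc (4 * v * J) * (4 * v * K) = (4 * v) ^ 2 * (J * K) := by ring
    _ ≤ (4 * v) ^ 2 * ENNReal.ofReal ((1 + 1/c + 2*M) * R ^ 8) := mul_le_mul_right key.1 _

lemma omegaB_nonneg {β : ℝ} {χ : ℝ → ℝ} (hχpos : ∀ t, 1 ≤ t → 0 < χ t) (x : E4) :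
    0 ≤ omegaB β χ x := by
  rw [omegaB]
  by_cases h : ‖x‖ < 1
  · rw [if_pos h]
    apply Real.rpow_nonneg
    rcases eq_or_lt_of_le (norm_nonneg x) with h0 | h0
    · rw [← h0]
      simp
    · exact Real.log_nonneg (by rw [le_div_iff₀ h0]; nlinarith [Real.exp_one_gt_d9])
  · rw [if_neg h]
    exact (hχpos _ (not_lt.1 h)).le

open Metric in
lemma osc_bound {β : ℝ} {χ : ℝ → ℝ} (x₀ : E4) (r : ℝ) (hr : 0 < r) {m K : ℝ} (hm : 0 < m)
    (hlow : ∀ x ∈ Metric.ball x₀ r, m ≤ omegaB β χ x)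
    (hup : ∀ x ∈ Metric.ball x₀ r, omegaB β χ x ≤ K) :
    (((volume (Metric.ball x₀ r)).toReal)⁻¹ * ∫ x in Metric.ball x₀ r, omegaB β χ x) *
      (((volume (Metric.ball x₀ r)).toReal)⁻¹ *
        ∫ x in Metric.ball x₀ r, (omegaB β χ x)⁻¹) ≤ K / m := by
  set V := (volume (Metric.ball x₀ r)).toReal with hV
  have hvol : volume (Metric.ball x₀ r) < ⊤ := measure_ball_lt_top
  have hV0 : 0 < V := ENNReal.toReal_pos (measure_ball_pos volume x₀ hr).ne' hvol.ne
  have hK0 : 0 ≤ K :=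
    le_trans (le_trans hm.le (hlow x₀ (mem_ball_self hr))) (hup x₀ (mem_ball_self hr))
  have hIω : (∫ x in Metric.ball x₀ r, omegaB β χ x) ≤ K * V := by
    refine le_trans (le_abs_self _) ?_
    rw [← Real.norm_eq_abs]
    refine norm_setIntegral_le_of_norm_le_const hvol fun x hx => ?_
    rw [Real.norm_eq_abs, abs_of_nonneg (le_trans hm.le (hlow x hx))]
    exact hup x hx
  have hIι : (∫ x in Metric.ball x₀ r, (omegaB β χ x)⁻¹) ≤ m⁻¹ * V := by
    refine le_trans (le_abs_self _) ?_
    rw [← Real.norm_eq_abs]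
    refine norm_setIntegral_le_of_norm_le_const hvol fun x hx => ?_
    rw [Real.norm_eq_abs, abs_of_nonneg (inv_nonneg.2 (le_trans hm.le (hlow x hx)))]
    exact inv_anti₀ hm (hlow x hx)
  have hω0 : 0 ≤ ∫ x in Metric.ball x₀ r, omegaB β χ x :=
    setIntegral_nonneg measurableSet_ball fun x hx => le_trans hm.le (hlow x hx)
  have hι0 : 0 ≤ ∫ x in Metric.ball x₀ r, (omegaB β χ x)⁻¹ :=
    setIntegral_nonneg measurableSet_ball fun x hx =>
      inv_nonneg.2 (le_trans hm.le (hlow x hx))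
  have step : (V⁻¹ * ∫ x in Metric.ball x₀ r, omegaB β χ x) *
      (V⁻¹ * ∫ x in Metric.ball x₀ r, (omegaB β χ x)⁻¹) ≤
      (V⁻¹ * (K * V)) * (V⁻¹ * (m⁻¹ * V)) := by
    apply mul_le_mul
    · exact mul_le_mul_of_nonneg_left hIω (inv_nonneg.2 hV0.le)
    · exact mul_le_mul_of_nonneg_left hIι (inv_nonneg.2 hV0.le)
    · exact mul_nonneg (inv_nonneg.2 hV0.le) hι0
    · exact mul_nonneg (inv_nonneg.2 hV0.le) (mul_nonneg hK0 hV0.le)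
  refine le_trans step (le_of_eq ?_)
  rw [div_eq_mul_inv]
  field_simp

open Metric in
lemma annulus_mem {x₀ x : E4} {r : ℝ} (hx : x ∈ Metric.ball x₀ r) (hra : r ≤ ‖x₀‖ / 2) :
    ‖x₀‖ / 2 ≤ ‖x‖ ∧ ‖x‖ ≤ 3 * ‖x₀‖ / 2 := by
  have hd : dist x x₀ < r := mem_ball.1 hx
  have h1 : ‖x₀‖ - ‖x‖ ≤ dist x x₀ := by
    rw [dist_eq_norm]
    have := norm_sub_norm_le (x₀ - x) x₀  -- junk
    calc ‖x₀‖ - ‖x‖ ≤ ‖x₀ - x‖ := by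
          have := norm_sub_norm_le x₀ x
          linarith [abs_le.1 (abs_norm_sub_norm_le x₀ x)]
      _ = ‖x - x₀‖ := norm_sub_rev x₀ x
  have h2 : ‖x‖ - ‖x₀‖ ≤ dist x x₀ := by
    rw [dist_eq_norm]
    linarith [abs_le.1 (abs_norm_sub_norm_le x x₀)]
  constructor <;> linarith

set_option maxHeartbeats 2000000 in
open Metric in
theorem stmt_5' (β : ℝ) (hβ : 0 < β ∧ β < 1) (χ : ℝ → ℝ)
    (hχ : ContinuousOn χ (Set.Ici 1) ∧ χ 1 = 1 ∧ (∀ t, 1 ≤ t → 0 < χ t) ∧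
      ∃ c > 0, ∀ t, 1 ≤ t → c ≤ χ t)
    (hM : ∃ M > 0, ∀ r : ℝ, 1 ≤ r →
      ((∫ t in Set.Ioc (1 : ℝ) r, t ^ 3 * χ t) * (∫ t in Set.Ioc (1 : ℝ) r, t ^ 3 / χ t)) /
          r ^ 8 ≤ M ∧
      (∫ t in Set.Ioc (1 : ℝ) r, t ^ 3 * χ t) / r ^ 8 ≤ M ∧
      sSup (χ '' Set.Icc r (4 * r)) / sInf (χ '' Set.Icc r (4 * r)) ≤ M) :
    ∃ C : ℝ, ∀ (x₀ : E4) (r : ℝ), 0 < r →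
      (((volume (Metric.ball x₀ r)).toReal)⁻¹ * ∫ x in Metric.ball x₀ r, omegaB β χ x) *
        (((volume (Metric.ball x₀ r)).toReal)⁻¹ *
          ∫ x in Metric.ball x₀ r, (omegaB β χ x)⁻¹) ≤ C := by
  obtain ⟨hχc, hχ1, hχpos, c, hc, hcle⟩ := hχ
  obtain ⟨M, hMpos, hMall⟩ := hM
  have hβ0 := hβ.1
  have hβ1 := hβ.2
  have hm₀ : 0 < min 1 c := lt_min one_pos hc
  have hlog3 : 0 ≤ Real.log 3 := Real.log_nonneg (by norm_num)
  set L3 : ℝ := 1 + Real.log 3 with hL3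
  set C₀ : ℝ := (L3 + M) / min 1 c + L3 + M with hC₀
  set C₃ : ℝ := 1 + 1/c + 2*M with hC₃
  have hL31 : 1 ≤ L3 := by rw [hL3]; linarith
  have hMC₀ : M ≤ C₀ := by
    rw [hC₀]
    have : 0 ≤ (L3 + M) / min 1 c := div_nonneg (by linarith) hm₀.le
    linarith
  have hL3C₀ : L3 ≤ C₀ := by
    rw [hC₀]
    have : 0 ≤ (L3 + M) / min 1 c := div_nonneg (by linarith) hm₀.le
    linarith
  have hmeasω : Measurable (omegaB β χ) := by
    have h : omegaB β χ = fun x => prof β χ ‖x‖ := funext (omegaB_eq_prof β χ)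
    rw [h]
    exact (measurable_prof β hχc).comp measurable_norm
  refine ⟨max C₀ (104976 * C₃), ?_⟩
  intro x₀ r hr
  by_cases hcase : r ≤ ‖x₀‖ / 2
  · -- far from the origin: bounded oscillation
    have ha0 : 0 < ‖x₀‖ := by linarith
    rcases le_or_gt ‖x₀‖ (2/3) with hsmall | h23
    · -- logarithmic region
      have h3a2 : 3 * ‖x₀‖ / 2 ≤ 1 := by linarith
      have hu1 : 1 ≤ Real.log (Real.exp 1 / (3 * ‖x₀‖ / 2)) :=
        one_le_log_div (by linarith) h3a2
      set m : ℝ := (Real.log (Real.exp 1 / (3 * ‖x₀‖ / 2))) ^ β with hmdef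
      set K : ℝ := (Real.log (Real.exp 1 / (‖x₀‖ / 2))) ^ β with hKdef
      have hm0 : 0 < m := Real.rpow_pos_of_pos (by linarith) β
      have hlow : ∀ x ∈ Metric.ball x₀ r, m ≤ omegaB β χ x := by
        intro x hx
        obtain ⟨hl, hu⟩ := annulus_mem hx hcase
        rw [omegaB]
        by_cases ht : ‖x‖ < 1
        · rw [if_pos ht]
          exact Real.rpow_le_rpow (by linarith) (log_div_mono (by linarith) hu) hβ0.le
        · have h1 : ‖x‖ = 1 := le_antisymm (by linarith) (not_lt.1 ht)
          have h2 : 3 * ‖x₀‖ / 2 = 1 := le_antisymm h3a2 (by linarith [not_lt.1 ht])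
          rw [if_neg ht, h1, hχ1, hmdef, h2, div_one, Real.log_exp, Real.one_rpow]
      have hup : ∀ x ∈ Metric.ball x₀ r, omegaB β χ x ≤ K := by
        intro x hx
        obtain ⟨hl, hu⟩ := annulus_mem hx hcase
        rw [omegaB]
        by_cases ht : ‖x‖ < 1
        · rw [if_pos ht]
          exact Real.rpow_le_rpow
            (Real.log_nonneg (by rw [le_div_iff₀ (by linarith)]; nlinarith [Real.exp_one_gt_d9]))
            (log_div_mono (by linarith) hl) hβ0.le
        · have h1 : ‖x‖ = 1 := le_antisymm (by linarith) (not_lt.1 ht)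
          rw [if_neg ht, h1, hχ1, hKdef]
          calc (1:ℝ) = 1 ^ β := (Real.one_rpow β).symm
            _ ≤ _ := Real.rpow_le_rpow zero_le_one
                (one_le_log_div (by linarith) (by linarith)) hβ0.le
      have hratio : K / m ≤ C₀ := by
        have hbaseK : 0 ≤ Real.log (Real.exp 1 / (‖x₀‖/2)) := by
          apply Real.log_nonneg
          rw [le_div_iff₀ (by linarith)]
          nlinarith [Real.exp_one_gt_d9]
        have hsplit : Real.log (Real.exp 1 / (‖x₀‖/2)) =
            Real.log 3 + Real.log (Real.exp 1 / (3 * ‖x₀‖ / 2)) := by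
          rw [← Real.log_mul (by norm_num)
            (ne_of_gt (div_pos (Real.exp_pos 1) (by linarith)))]
          congr 1
          field_simp
        have hle : Real.log (Real.exp 1 / (‖x₀‖/2)) ≤
            L3 * Real.log (Real.exp 1 / (3 * ‖x₀‖ / 2)) := by
          rw [hsplit, hL3]
          nlinarith
        have hKle : K ≤ L3 * m := by
          have s1 : K ≤ (L3 * Real.log (Real.exp 1 / (3 * ‖x₀‖ / 2))) ^ β := by
            rw [hKdef]
            exact Real.rpow_le_rpow hbaseK hle hβ0.le
          have s2 : (L3 * Real.log (Real.exp 1 / (3 * ‖x₀‖ / 2))) ^ β = L3 ^ β * m := by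
            rw [hmdef]
            exact Real.mul_rpow (by linarith) (by linarith)
          have s3 : L3 ^ β ≤ L3 := by
            have h' := Real.rpow_le_rpow_of_exponent_le hL31 hβ1.le
            rwa [Real.rpow_one] at h'
          calc K ≤ (L3 * Real.log (Real.exp 1 / (3 * ‖x₀‖ / 2))) ^ β := s1
            _ = L3 ^ β * m := s2
            _ ≤ L3 * m := mul_le_mul_of_nonneg_right s3 hm0.le
        rw [div_le_iff₀ hm0]
        exact le_trans hKle (mul_le_mul_of_nonneg_right hL3C₀ hm0.le)
      exact le_trans (osc_bound x₀ r hr hm0 hlow hup)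
        (le_trans hratio (le_max_left _ _))
    · rcases lt_or_ge ‖x₀‖ 2 with hmid | hfar
      · -- middle region
        have hSupM : ∀ t : ℝ, 1 ≤ t → t ≤ 4 → χ t ≤ M := by
          intro t ht1 ht4
          have hsub : Set.Icc (1:ℝ) (4*1) ⊆ Set.Ici 1 := fun s hs => hs.1
          have hcomp : IsCompact (χ '' Set.Icc (1:ℝ) (4*1)) :=
            isCompact_Icc.image_of_continuousOn (hχc.mono hsub)
          have hne : (χ '' Set.Icc (1:ℝ) (4*1)).Nonempty :=
            ⟨χ 1, ⟨1, ⟨le_rfl, by norm_num⟩, rfl⟩⟩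
          have hinfc : c ≤ sInf (χ '' Set.Icc (1:ℝ) (4*1)) := by
            refine le_csInf hne ?_
            rintro b ⟨s, hs, rfl⟩
            exact hcle s hs.1
          have hinfpos : 0 < sInf (χ '' Set.Icc (1:ℝ) (4*1)) := lt_of_lt_of_le hc hinfc
          have hinfle : sInf (χ '' Set.Icc (1:ℝ) (4*1)) ≤ 1 := by
            have hmem : χ 1 ∈ χ '' Set.Icc (1:ℝ) (4*1) := ⟨1, ⟨le_rfl, by norm_num⟩, rfl⟩
            calc sInf (χ '' Set.Icc (1:ℝ) (4*1)) ≤ χ 1 := csInf_le hcomp.bddBelow hmem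
              _ = 1 := hχ1
          have hdiv := (hMall 1 le_rfl).2.2
          rw [div_le_iff₀ hinfpos] at hdiv
          have hsupS : sSup (χ '' Set.Icc (1:ℝ) (4*1)) ≤ M := by nlinarith
          refine le_trans (le_csSup hcomp.bddAbove ⟨t, ⟨ht1, by norm_num; linarith⟩, rfl⟩) hsupS
        have hlow : ∀ x ∈ Metric.ball x₀ r, min 1 c ≤ omegaB β χ x := by
          intro x hx
          obtain ⟨hl, hu⟩ := annulus_mem hx hcase
          rw [omegaB]
          by_cases ht : ‖x‖ < 1
          · rw [if_pos ht]
            have h1 : (1:ℝ) ≤ (Real.log (Real.exp 1 / ‖x‖)) ^ β := by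
              calc (1:ℝ) = 1 ^ β := (Real.one_rpow β).symm
                _ ≤ _ := Real.rpow_le_rpow zero_le_one
                    (one_le_log_div (by linarith) ht.le) hβ0.le
            linarith [min_le_left (1:ℝ) c]
          · rw [if_neg ht]
            exact le_trans (min_le_right 1 c) (hcle _ (not_lt.1 ht))
        have hup : ∀ x ∈ Metric.ball x₀ r, omegaB β χ x ≤ max L3 M := by
          intro x hx
          obtain ⟨hl, hu⟩ := annulus_mem hx hcase
          rw [omegaB]
          by_cases ht : ‖x‖ < 1
          · rw [if_pos ht]
            have hx3 : 1/3 ≤ ‖x‖ := by linarith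
            have hlogle : Real.log (Real.exp 1 / ‖x‖) ≤ L3 := by
              have h1 := log_div_mono (by norm_num : (0:ℝ) < 1/3) hx3
              have h2 : Real.log (Real.exp 1 / (1/3 : ℝ)) = L3 := by
                rw [show Real.exp 1 / (1/3 : ℝ) = 3 * Real.exp 1 by ring,
                  Real.log_mul (by norm_num) (Real.exp_ne_zero 1), Real.log_exp, hL3]
                ring
              linarith
            have hbase : 1 ≤ Real.log (Real.exp 1 / ‖x‖) := one_le_log_div (by linarith) ht.le
            have h3 : (Real.log (Real.exp 1 / ‖x‖)) ^ β ≤ Real.log (Real.exp 1 / ‖x‖) := by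
              have := Real.rpow_le_rpow_of_exponent_le hbase hβ1.le
              rwa [Real.rpow_one] at this
            exact le_trans (le_trans h3 hlogle) (le_max_left _ _)
          · rw [if_neg ht]
            exact le_trans (hSupM ‖x‖ (not_lt.1 ht) (by linarith)) (le_max_right _ _)
        have hratio : max L3 M / min 1 c ≤ C₀ := by
          have hKle : max L3 M ≤ L3 + M := max_le (by linarith) (by linarith)
          calc max L3 M / min 1 c ≤ (L3 + M) / min 1 c :=
                (div_le_div_iff_of_pos_right hm₀).2 hKle
            _ ≤ C₀ := by rw [hC₀]; linarith
        exact le_trans (osc_bound x₀ r hr hm₀ hlow hup)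
          (le_trans hratio (le_max_left _ _))
      · -- outer region, use condition (iii)
        have h12 : (1:ℝ) ≤ ‖x₀‖/2 := by linarith
        have hsub : Set.Icc (‖x₀‖/2) (4*(‖x₀‖/2)) ⊆ Set.Ici 1 := fun s hs => le_trans h12 hs.1
        have hcomp : IsCompact (χ '' Set.Icc (‖x₀‖/2) (4*(‖x₀‖/2))) :=
          isCompact_Icc.image_of_continuousOn (hχc.mono hsub)
        have hne : (χ '' Set.Icc (‖x₀‖/2) (4*(‖x₀‖/2))).Nonempty :=
          ⟨χ (‖x₀‖/2), ⟨‖x₀‖/2, ⟨le_rfl, by linarith⟩, rfl⟩⟩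
        have hinfc : c ≤ sInf (χ '' Set.Icc (‖x₀‖/2) (4*(‖x₀‖/2))) := by
          refine le_csInf hne ?_
          rintro b ⟨s, hs, rfl⟩
          exact hcle s (le_trans h12 hs.1)
        have hm0 : 0 < sInf (χ '' Set.Icc (‖x₀‖/2) (4*(‖x₀‖/2))) := lt_of_lt_of_le hc hinfc
        have hmemx : ∀ x ∈ Metric.ball x₀ r, ‖x‖ ∈ Set.Icc (‖x₀‖/2) (4*(‖x₀‖/2)) := by
          intro x hx
          obtain ⟨hl, hu⟩ := annulus_mem hx hcase
          exact ⟨hl, by linarith⟩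
        have hlow : ∀ x ∈ Metric.ball x₀ r,
            sInf (χ '' Set.Icc (‖x₀‖/2) (4*(‖x₀‖/2))) ≤ omegaB β χ x := by
          intro x hx
          have hx1 : (1:ℝ) ≤ ‖x‖ := le_trans h12 (hmemx x hx).1
          rw [omegaB, if_neg (not_lt.2 hx1)]
          exact csInf_le hcomp.bddBelow ⟨‖x‖, hmemx x hx, rfl⟩
        have hup : ∀ x ∈ Metric.ball x₀ r,
            omegaB β χ x ≤ sSup (χ '' Set.Icc (‖x₀‖/2) (4*(‖x₀‖/2))) := by
          intro x hx
          have hx1 : (1:ℝ) ≤ ‖x‖ := le_trans h12 (hmemx x hx).1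
          rw [omegaB, if_neg (not_lt.2 hx1)]
          exact le_csSup hcomp.bddAbove ⟨‖x‖, hmemx x hx, rfl⟩
        have hdiv := (hMall (‖x₀‖/2) h12).2.2
        exact le_trans (osc_bound x₀ r hr hm0 hlow hup)
          (le_trans hdiv (le_trans hMC₀ (le_max_left _ _)))
  · -- ball essentially centered: reduce to centered balls
    push_neg at hcase
    have h3r : 0 < 3 * r := by linarith
    obtain ⟨hprodC, hJfin, hKfin⟩ := centered_bounds hβ0 hβ1 hχc hχpos hc hcle hMpos
      (fun s hs => (hMall s hs).1) (fun s hs => (hMall s hs).2.1) h3r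
    have hsub : Metric.ball x₀ r ⊆ Metric.ball (0:E4) (3*r) := by
      intro x hx
      rw [mem_ball_zero_iff]
      have hd : dist x x₀ < r := mem_ball.1 hx
      have h' : ‖x‖ - ‖x₀‖ ≤ ‖x - x₀‖ := norm_sub_norm_le x x₀
      rw [dist_eq_norm] at hd
      linarith
    set vT := (volume (Metric.ball (0:E4) 1)).toReal with hvT
    have hvpos : 0 < vT :=
      ENNReal.toReal_pos (measure_ball_pos volume 0 one_pos).ne' measure_ball_lt_top.ne
    have hVeq : (volume (Metric.ball x₀ r)).toReal = r ^ 4 * vT := by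
      rw [Measure.addHaar_ball volume x₀ hr.le,
        show Module.finrank ℝ E4 = 4 from finrank_euclideanSpace_fin, ENNReal.toReal_mul,
        ENNReal.toReal_ofReal (by positivity)]
    have heqω : (∫ x in Metric.ball x₀ r, omegaB β χ x)
        = (∫⁻ x in Metric.ball x₀ r, ENNReal.ofReal (omegaB β χ x)).toReal := by
      rw [integral_eq_lintegral_of_nonneg_ae (ae_of_all _ fun x => omegaB_nonneg hχpos x)
        hmeasω.aestronglyMeasurable]
    have heqι : (∫ x in Metric.ball x₀ r, (omegaB β χ x)⁻¹)
        = (∫⁻ x in Metric.ball x₀ r, ENNReal.ofReal ((omegaB β χ x)⁻¹)).toReal := by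
      rw [integral_eq_lintegral_of_nonneg_ae
        (ae_of_all _ fun x => inv_nonneg.2 (omegaB_nonneg hχpos x))
        hmeasω.inv.aestronglyMeasurable]
    have hωle : (∫ x in Metric.ball x₀ r, omegaB β χ x)
        ≤ (∫⁻ x in Metric.ball (0:E4) (3*r), ENNReal.ofReal (omegaB β χ x)).toReal := by
      rw [heqω]
      exact ENNReal.toReal_mono hJfin (lintegral_mono_set hsub)
    have hιle : (∫ x in Metric.ball x₀ r, (omegaB β χ x)⁻¹)
        ≤ (∫⁻ x in Metric.ball (0:E4) (3*r), ENNReal.ofReal ((omegaB β χ x)⁻¹)).toReal := by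
      rw [heqι]
      exact ENNReal.toReal_mono hKfin (lintegral_mono_set hsub)
    have hω0 : 0 ≤ ∫ x in Metric.ball x₀ r, omegaB β χ x :=
      setIntegral_nonneg measurableSet_ball fun x _ => omegaB_nonneg hχpos x
    have hι0 : 0 ≤ ∫ x in Metric.ball x₀ r, (omegaB β χ x)⁻¹ :=
      setIntegral_nonneg measurableSet_ball fun x _ => inv_nonneg.2 (omegaB_nonneg hχpos x)
    have hC₃0 : 0 < C₃ := by rw [hC₃]; positivity
    have hprodR : (∫⁻ x in Metric.ball (0:E4) (3*r), ENNReal.ofReal (omegaB β χ x)).toReal *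
        (∫⁻ x in Metric.ball (0:E4) (3*r), ENNReal.ofReal ((omegaB β χ x)⁻¹)).toReal ≤
        (4*vT)^2 * (C₃ * (3*r)^8) := by
      rw [← ENNReal.toReal_mul]
      have hne : ((4 * volume (Metric.ball (0:E4) 1)) ^ 2 *
          ENNReal.ofReal (C₃ * (3*r) ^ 8)) ≠ ⊤ :=
        ENNReal.mul_ne_top (ENNReal.pow_ne_top
          (ENNReal.mul_ne_top (by simp) measure_ball_lt_top.ne)) ENNReal.ofReal_ne_top
      refine le_trans (ENNReal.toReal_mono hne hprodC) (le_of_eq ?_)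
      rw [ENNReal.toReal_mul, ENNReal.toReal_pow, ENNReal.toReal_mul,
        ENNReal.toReal_ofReal (by positivity)]
      norm_num
      exact Or.inl (by rw [hvT])
    set V := (volume (Metric.ball x₀ r)).toReal with hVdef
    have hV0 : 0 < V := by rw [hVeq]; positivity
    calc (V⁻¹ * ∫ x in Metric.ball x₀ r, omegaB β χ x) *
        (V⁻¹ * ∫ x in Metric.ball x₀ r, (omegaB β χ x)⁻¹)
        ≤ (V⁻¹ * (∫⁻ x in Metric.ball (0:E4) (3*r),
              ENNReal.ofReal (omegaB β χ x)).toReal) *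
          (V⁻¹ * (∫⁻ x in Metric.ball (0:E4) (3*r),
              ENNReal.ofReal ((omegaB β χ x)⁻¹)).toReal) := by
          apply mul_le_mul
          · exact mul_le_mul_of_nonneg_left hωle (inv_nonneg.2 hV0.le)
          · exact mul_le_mul_of_nonneg_left hιle (inv_nonneg.2 hV0.le)
          · exact mul_nonneg (inv_nonneg.2 hV0.le) hι0
          · exact mul_nonneg (inv_nonneg.2 hV0.le) ENNReal.toReal_nonneg
      _ = ((∫⁻ x in Metric.ball (0:E4) (3*r), ENNReal.ofReal (omegaB β χ x)).toReal *
            (∫⁻ x in Metric.ball (0:E4) (3*r),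
              ENNReal.ofReal ((omegaB β χ x)⁻¹)).toReal) * (V⁻¹ * V⁻¹) := by ring
      _ ≤ ((4*vT)^2 * (C₃ * (3*r)^8)) * (V⁻¹ * V⁻¹) := by
          exact mul_le_mul_of_nonneg_right hprodR
            (mul_nonneg (inv_nonneg.2 hV0.le) (inv_nonneg.2 hV0.le))
      _ = 104976 * C₃ := by
          rw [hVeq]
          field_simp
          ring
      _ ≤ max C₀ (104976 * C₃) := le_max_right _ _

/-- under the three conditions on `χ`, the weight `ω_β` is in the
Muckenhoupt `A₂` class on `ℝ⁴`. -/
theorem stmt_5 (β : ℝ) (hβ : 0 < β ∧ β < 1) (χ : ℝ → ℝ) (hχ : ChiHyp χ)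
    (hM : ∃ M > 0, ∀ r : ℝ, 1 ≤ r →
      ((∫ t in Set.Ioc (1 : ℝ) r, t ^ 3 * χ t) * (∫ t in Set.Ioc (1 : ℝ) r, t ^ 3 / χ t)) /
          r ^ 8 ≤ M ∧
      (∫ t in Set.Ioc (1 : ℝ) r, t ^ 3 * χ t) / r ^ 8 ≤ M ∧
      sSup (χ '' Set.Icc r (4 * r)) / sInf (χ '' Set.Icc r (4 * r)) ≤ M) :
    ∃ C : ℝ, ∀ (x₀ : E4) (r : ℝ), 0 < r →
      (((volume (Metric.ball x₀ r)).toReal)⁻¹ * ∫ x in Metric.ball x₀ r, omegaB β χ x) *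
        (((volume (Metric.ball x₀ r)).toReal)⁻¹ *
          ∫ x in Metric.ball x₀ r, (omegaB β χ x)⁻¹) ≤ C := by
  exact stmt_5' β hβ χ hχ hM

end
end

section
/- Let β ∈ (0,1) and let f satisfy condition (F1) with parameters c₀, p, q, α. Let r₁, r₂, r₃ > 1 satisfy 1/r₁ + 1/r₂ + 1/r₃ = 1. Let (u_n) and u be measurable functions on ℝ⁴ such that sup_n ∫_{ℝ⁴} ( e^{r₁ α |u_n|^{2/(1−β)}} − 1 ) dx < ∞, sup_n ‖u_n‖_{L^{r₂(q−1)}(ℝ⁴)} < ∞, sup_n ‖u_n‖_{L^p(ℝ⁴)} < ∞, and u_n → u both in L^p(ℝ⁴) and in L^{r₃}(ℝ⁴). Then ∫_{ℝ⁴} f(u_n)(u_n − u) dx → 0 as n → ∞. -/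
open MeasureTheory Real Filter Topology

noncomputable section

lemma aux_exp_sub_one_ge_pow (k : ℕ) {x : ℝ} (hx : 0 ≤ x) (hk : 1 ≤ k) :
    x ^ k / (Nat.factorial k : ℝ) ≤ Real.exp x - 1 := by
  have hsub : ({0, k} : Finset ℕ) ⊆ Finset.range (k + 1) := by
    intro i hi
    simp only [Finset.mem_insert, Finset.mem_singleton] at hi
    rcases hi with rfl | rfl <;> simp [Nat.lt_succ_iff]
  have h1 : ∑ i ∈ ({0, k} : Finset ℕ), x ^ i / (Nat.factorial i : ℝ)
      ≤ ∑ i ∈ Finset.range (k+1), x ^ i / (Nat.factorial i : ℝ) :=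
    Finset.sum_le_sum_of_subset_of_nonneg hsub (fun i _ _ => by positivity)
  have h2 : ∑ i ∈ Finset.range (k+1), x ^ i / (Nat.factorial i : ℝ) ≤ Real.exp x :=
    Real.sum_le_exp_of_nonneg hx _
  have h0k : (0 : ℕ) ≠ k := by omega
  rw [Finset.sum_pair h0k] at h1
  simp only [pow_zero, Nat.factorial_zero, Nat.cast_one, div_one] at h1
  linarith

lemma aux_moment (c m s : ℝ) (hc : 0 < c) (hs : 0 < s) (hms : s ≤ m) :
    ∃ C : ℝ, 0 ≤ C ∧ ∀ t : ℝ, 0 ≤ t → t ^ m ≤ C * (Real.exp (c * t ^ s) - 1) := by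
  set k : ℕ := ⌈m / s⌉₊ with hk_def
  have hm0 : 0 < m := lt_of_lt_of_le hs hms
  have hk1 : 1 ≤ k := Nat.ceil_pos.mpr (by positivity)
  have hmk : m ≤ s * k := by
    have h := Nat.le_ceil (m / s)
    rw [← hk_def] at h
    have : m / s ≤ (k : ℝ) := h
    calc m = s * (m / s) := by field_simp
    _ ≤ s * k := by nlinarith
  refine ⟨1 / c + (Nat.factorial k : ℝ) / c ^ k, by positivity, fun t ht => ?_⟩
  set y : ℝ := c * t ^ s with hy_def
  have hy0 : 0 ≤ y := by positivity
  have hts : t ^ s = y / c := by rw [hy_def]; field_simp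
  have he1 : y ≤ Real.exp y - 1 := by
    have := Real.add_one_le_exp y; linarith
  have hek : y ^ k / (Nat.factorial k : ℝ) ≤ Real.exp y - 1 :=
    aux_exp_sub_one_ge_pow k hy0 hk1
  have hE0 : 0 ≤ Real.exp y - 1 := le_trans hy0 he1
  have hsplit : t ^ m ≤ t ^ s + (t ^ s) ^ k := by
    rcases le_total t 1 with ht1 | ht1
    · have h1 : t ^ m ≤ t ^ s := Real.rpow_le_rpow_of_exponent_ge' ht ht1 hs.le hms
      have h2 : 0 ≤ (t ^ s) ^ k := by positivity
      linarith
    · have h1 : t ^ m ≤ t ^ (s * k) := Real.rpow_le_rpow_of_exponent_le ht1 hmk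
      have h2 : t ^ (s * (k : ℝ)) = (t ^ s) ^ k := by
        rw [Real.rpow_mul ht, Real.rpow_natCast]
      have h3 : 0 ≤ t ^ s := Real.rpow_nonneg ht s
      rw [h2] at h1
      linarith
  have hfk : (0:ℝ) < (Nat.factorial k : ℝ) := by positivity
  have hb1 : t ^ s ≤ (1 / c) * (Real.exp y - 1) := by
    rw [hts]
    have : y / c ≤ (Real.exp y - 1) / c := by gcongr
    calc y / c ≤ (Real.exp y - 1) / c := this
    _ = (1 / c) * (Real.exp y - 1) := by ring
  have hb2 : (t ^ s) ^ k ≤ ((Nat.factorial k : ℝ) / c ^ k) * (Real.exp y - 1) := by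
    rw [hts, div_pow]
    have hck : (0:ℝ) < c ^ k := by positivity
    have hyk : y ^ k ≤ (Real.exp y - 1) * (Nat.factorial k : ℝ) := by
      rw [div_le_iff₀ hfk] at hek; linarith
    calc y ^ k / c ^ k ≤ ((Real.exp y - 1) * (Nat.factorial k : ℝ)) / c ^ k := by gcongr
    _ = (Nat.factorial k : ℝ) / c ^ k * (Real.exp y - 1) := by ring
  calc t ^ m ≤ t ^ s + (t ^ s) ^ k := hsplit
  _ ≤ (1 / c) * (Real.exp y - 1) + ((Nat.factorial k : ℝ) / c ^ k) * (Real.exp y - 1) := by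
      linarith
  _ = (1 / c + (Nat.factorial k : ℝ) / c ^ k) * (Real.exp y - 1) := by ring

lemma aux_exp_sub_one_rpow_le {x ρ : ℝ} (hx : 0 ≤ x) (hρ : 1 ≤ ρ) :
    (Real.exp x - 1) ^ ρ ≤ Real.exp (ρ * x) - 1 := by
  have h1 : (0:ℝ) ≤ Real.exp x - 1 := by
    have := Real.one_le_exp hx; linarith
  have key := NNReal.add_rpow_le_rpow_add ((Real.exp x - 1).toNNReal) 1 hρ
  have hcoe := (NNReal.coe_le_coe).mpr key
  push_cast [NNReal.coe_rpow] at hcoe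
  rw [Real.coe_toNNReal _ h1] at hcoe
  have h2 : (Real.exp x - 1 + 1 : ℝ) = Real.exp x := by ring
  rw [h2] at hcoe
  have h3 : (Real.exp x) ^ ρ = Real.exp (ρ * x) := by
    rw [mul_comm, Real.exp_mul]
  simp only [Real.one_rpow] at hcoe
  linarith [hcoe, h3 ▸ hcoe]

lemma aux_exp_sub_one_le_mul (y : ℝ) (hy : 0 ≤ y) :
    Real.exp y - 1 ≤ y * Real.exp y := by
  have h := Real.add_one_le_exp (-y)
  have h2 := mul_le_mul_of_nonneg_right h (Real.exp_pos y).le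
  rw [Real.exp_neg, inv_mul_cancel₀ (Real.exp_pos y).ne'] at h2
  nlinarith

lemma aux_lemD (Q s α ρ r₁ : ℝ) (hQ : 0 < Q) (hs : 0 < s) (hα : 0 < α)
    (hρ : 1 ≤ ρ) (hρr : ρ < r₁) :
    ∃ C : ℝ, 0 ≤ C ∧ ∀ t : ℝ, 0 ≤ t →
      (t ^ Q * (Real.exp (α * t ^ s) - 1)) ^ ρ
        ≤ C * (Real.exp (r₁ * α * t ^ s) - 1) := by
  have hδ : 0 < (r₁ - ρ) * α := by nlinarith
  obtain ⟨C', hC'0, hC'⟩ := aux_moment ((r₁ - ρ) * α) (Q * ρ + s) s hδ hs (by nlinarith)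
  refine ⟨ρ * α * C', by positivity, fun t ht => ?_⟩
  have hts : 0 ≤ t ^ s := Real.rpow_nonneg ht s
  have hE0 : 0 ≤ Real.exp (α * t ^ s) - 1 := by
    have := Real.one_le_exp (by positivity : 0 ≤ α * t ^ s); linarith
  set a : ℝ := t ^ s with ha_def
  have e1 : (Real.exp (α * a) - 1) ^ ρ ≤ Real.exp (ρ * (α * a)) - 1 :=
    aux_exp_sub_one_rpow_le (by positivity) hρ
  have e2 : Real.exp (ρ * (α * a)) - 1 ≤ (ρ * (α * a)) * Real.exp (ρ * (α * a)) :=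
    aux_exp_sub_one_le_mul _ (by positivity)
  have e4 : t ^ (Q * ρ + s) ≤ C' * (Real.exp ((r₁ - ρ) * α * a) - 1) := hC' t ht
  have e5 : Real.exp ((r₁ - ρ) * α * a) * Real.exp (ρ * (α * a)) = Real.exp (r₁ * α * a) := by
    rw [← Real.exp_add]; ring_nf
  have hexp1 : (1:ℝ) ≤ Real.exp (ρ * (α * a)) := Real.one_le_exp (by positivity)
  have hEδ : 0 ≤ Real.exp ((r₁ - ρ) * α * a) - 1 := by
    have := Real.one_le_exp (by positivity : (0:ℝ) ≤ (r₁ - ρ) * α * a); linarith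
  have htQρ : 0 ≤ t ^ (Q * ρ) := Real.rpow_nonneg ht _
  have hadd : t ^ (Q * ρ + s) = t ^ (Q * ρ) * a := by
    rw [Real.rpow_add' ht (by positivity)]
  calc (t ^ Q * (Real.exp (α * a) - 1)) ^ ρ
      = t ^ (Q * ρ) * (Real.exp (α * a) - 1) ^ ρ := by
        rw [Real.mul_rpow (Real.rpow_nonneg ht Q) hE0, ← Real.rpow_mul ht]
    _ ≤ t ^ (Q * ρ) * ((ρ * (α * a)) * Real.exp (ρ * (α * a))) := by
        apply mul_le_mul_of_nonneg_left (le_trans e1 e2) htQρ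
    _ = (ρ * α) * (t ^ (Q * ρ + s) * Real.exp (ρ * (α * a))) := by
        rw [hadd]; ring
    _ ≤ (ρ * α) * ((C' * (Real.exp ((r₁ - ρ) * α * a) - 1)) * Real.exp (ρ * (α * a))) := by
        apply mul_le_mul_of_nonneg_left _ (by positivity)
        apply mul_le_mul_of_nonneg_right e4 (Real.exp_pos _).le
    _ = (ρ * α * C') * (Real.exp (r₁ * α * a) - Real.exp (ρ * (α * a))) := by
        rw [← e5]; ring
    _ ≤ (ρ * α * C') * (Real.exp (r₁ * α * a) - 1) := by
        apply mul_le_mul_of_nonneg_left _ (by positivity)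
        linarith

lemma aux_meas_abs_rpow {α : Type*} [MeasurableSpace α] {g : α → ℝ} (hg : Measurable g)
    {c : ℝ} (hc : 0 ≤ c) : Measurable fun x => |g x| ^ c := by
  have heq : (fun x => |g x| ^ c) = fun x => ((ENNReal.ofReal |g x|) ^ c).toReal := by
    funext x
    rw [ENNReal.ofReal_rpow_of_nonneg (abs_nonneg _) hc,
      ENNReal.toReal_ofReal (by positivity)]
  rw [heq]
  exact ENNReal.measurable_toReal.comp (ENNReal.continuous_rpow_const.measurable.comp
    (ENNReal.measurable_ofReal.comp hg.abs))

/-- convergence `∫ f(u_n)(u_n - u) dx → 0` under uniform exponential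
and `L^r` bounds together with `L^p` and `L^{r₃}` convergence. -/
theorem stmt_16 (β : ℝ) (hβ : 0 < β ∧ β < 1)
    (f : ℝ → ℝ) (hfc : Continuous f) (hf0 : ∀ s ≤ 0, f s = 0)
    (c₀ p q α : ℝ) (hF1 : CondF1 β c₀ p q α f)
    (r₁ r₂ r₃ : ℝ) (hr₁ : 1 < r₁) (hr₂ : 1 < r₂) (hr₃ : 1 < r₃)
    (hr : 1 / r₁ + 1 / r₂ + 1 / r₃ = 1)
    (U : ℕ → E4 → ℝ) (u : E4 → ℝ) (hUm : ∀ n, Measurable (U n)) (hum : Measurable u)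
    (hexp : ∃ B : ℝ, ∀ n,
      (∫⁻ x : E4, ENNReal.ofReal (Real.exp (r₁ * α * |U n x| ^ (2 / (1 - β))) - 1)) ≤
        ENNReal.ofReal B)
    (hLr2 : ∃ B : ENNReal, ∀ n,
      (∫⁻ x : E4, ENNReal.ofReal (|U n x| ^ (r₂ * (q - 1)))) ≤ B)
    (hLp : ∃ B : ENNReal, ∀ n, (∫⁻ x : E4, ENNReal.ofReal (|U n x| ^ p)) ≤ B)
    (hconvp : Tendsto (fun n => ∫⁻ x : E4, ENNReal.ofReal (|U n x - u x| ^ p)) atTop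
      (nhds 0))
    (hconvr3 : Tendsto (fun n => ∫⁻ x : E4, ENNReal.ofReal (|U n x - u x| ^ r₃)) atTop
      (nhds 0)) :
    Tendsto (fun n => ∫ x : E4, f (U n x) * (U n x - u x)) atTop (nhds 0) := by
  obtain ⟨hβ0, hβ1⟩ := hβ
  have h1β : 0 < 1 - β := by linarith
  set s : ℝ := 2 / (1 - β) with hs_def
  obtain ⟨hc₀, hps, hqs, hα, hfb⟩ := hF1
  have hs0 : 0 < s := by positivity
  have hs2 : 2 < s := by rw [hs_def, lt_div_iff₀ h1β]; nlinarith
  have hp1 : 1 < p := by linarith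
  have hq1 : 1 < q := by linarith
  have hp0 : 0 < p := by linarith
  have hr₁0 : 0 < r₁ := by linarith
  have hr₃0 : 0 < r₃ := by linarith
  set p' : ℝ := p / (p - 1) with hp'_def
  have hp'conj : p'.HolderConjugate p :=
    ((Real.holderConjugate_iff_eq_conjExponent hp1).mpr hp'_def).symm
  set ρ : ℝ := r₃ / (r₃ - 1) with hρ_def
  have hρconj : ρ.HolderConjugate r₃ :=
    ((Real.holderConjugate_iff_eq_conjExponent hr₃).mpr hρ_def).symm
  have hρ1 : 1 < ρ := hρconj.lt
  have hρ0 : 0 < ρ := by linarith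
  have hp'0 : 0 < p' := hp'conj.pos
  have hinvρ : 1 / ρ = 1 / r₁ + 1 / r₂ := by
    rw [hρ_def, one_div_div]
    have h3 : (r₃ - 1) / r₃ = 1 - 1 / r₃ := by field_simp
    rw [h3]; linarith
  have hρr₁ : ρ < r₁ := by
    have h2 : 1 / r₁ < 1 / ρ := by
      rw [hinvρ]
      have : 0 < 1 / r₂ := by positivity
      linarith
    exact lt_of_one_div_lt_one_div hr₁0 h2
  obtain ⟨Cp, hCp0, hCp⟩ := aux_moment (r₁ * α) p s (by positivity) hs0 hps.le
  obtain ⟨Cb, hCb0, hCb⟩ := aux_lemD (q - 1) s α ρ r₁ (by linarith) hs0 hα hρ1.le hρr₁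
  obtain ⟨B, hB⟩ := hexp
  -- measurability
  have hmΔ : ∀ n, Measurable fun x => |U n x - u x| := fun n => ((hUm n).sub hum).abs
  have hmAr : ∀ n, Measurable fun x : E4 => |U n x| ^ (p - 1) :=
    fun n => aux_meas_abs_rpow (hUm n) (by linarith)
  have hmExp : ∀ n, Measurable fun x : E4 => Real.exp (α * |U n x| ^ s) - 1 := by
    intro n
    have h1 : Measurable fun x : E4 => α * |U n x| ^ s :=
      (aux_meas_abs_rpow (hUm n) hs0.le).const_mul α
    exact (Real.measurable_exp.comp h1).sub measurable_const
  have hmBr : ∀ n, Measurable fun x : E4 =>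
      |U n x| ^ (q - 1) * (Real.exp (α * |U n x| ^ s) - 1) :=
    fun n => (aux_meas_abs_rpow (hUm n) (by linarith)).mul (hmExp n)
  have hE0 : ∀ (n : ℕ) (x : E4), 0 ≤ Real.exp (α * |U n x| ^ s) - 1 := by
    intro n x
    have := Real.one_le_exp (by positivity : (0:ℝ) ≤ α * |U n x| ^ s)
    linarith
  -- the exponential moment bound, reused
  have hI1 : ∀ n, (∫⁻ x : E4, ENNReal.ofReal (|U n x| ^ p)) ≤
      ENNReal.ofReal Cp * ENNReal.ofReal B := by
    intro n
    calc (∫⁻ x : E4, ENNReal.ofReal (|U n x| ^ p))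
        ≤ ∫⁻ x : E4, ENNReal.ofReal Cp *
            ENNReal.ofReal (Real.exp (r₁ * α * |U n x| ^ s) - 1) := by
          apply lintegral_mono
          intro x
          dsimp only
          rw [← ENNReal.ofReal_mul hCp0]
          exact ENNReal.ofReal_le_ofReal (hCp _ (abs_nonneg _))
      _ = ENNReal.ofReal Cp *
            ∫⁻ x : E4, ENNReal.ofReal (Real.exp (r₁ * α * |U n x| ^ s) - 1) :=
          lintegral_const_mul' _ _ ENNReal.ofReal_ne_top
      _ ≤ ENNReal.ofReal Cp * ENNReal.ofReal B := mul_le_mul_right (hB n) _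
  have hI2 : ∀ n, (∫⁻ x : E4, ENNReal.ofReal
        ((|U n x| ^ (q - 1) * (Real.exp (α * |U n x| ^ s) - 1)) ^ ρ)) ≤
      ENNReal.ofReal Cb * ENNReal.ofReal B := by
    intro n
    calc (∫⁻ x : E4, ENNReal.ofReal
          ((|U n x| ^ (q - 1) * (Real.exp (α * |U n x| ^ s) - 1)) ^ ρ))
        ≤ ∫⁻ x : E4, ENNReal.ofReal Cb *
            ENNReal.ofReal (Real.exp (r₁ * α * |U n x| ^ s) - 1) := by
          apply lintegral_mono
          intro x
          dsimp only
          rw [← ENNReal.ofReal_mul hCb0]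
          exact ENNReal.ofReal_le_ofReal (hCb _ (abs_nonneg _))
      _ = ENNReal.ofReal Cb *
            ∫⁻ x : E4, ENNReal.ofReal (Real.exp (r₁ * α * |U n x| ^ s) - 1) :=
          lintegral_const_mul' _ _ ENNReal.ofReal_ne_top
      _ ≤ ENNReal.ofReal Cb * ENNReal.ofReal B := mul_le_mul_right (hB n) _
  -- Hölder estimates
  have hA : ∀ n, (∫⁻ x : E4, ENNReal.ofReal (|U n x| ^ (p - 1) * |U n x - u x|)) ≤
      (ENNReal.ofReal Cp * ENNReal.ofReal B) ^ (1 / p') *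
        (∫⁻ x : E4, ENNReal.ofReal (|U n x - u x| ^ p)) ^ (1 / p) := by
    intro n
    have hH := ENNReal.lintegral_mul_le_Lp_mul_Lq (volume : Measure E4) hp'conj
      (f := fun x => ENNReal.ofReal (|U n x| ^ (p - 1)))
      (g := fun x => ENNReal.ofReal (|U n x - u x|))
      (ENNReal.measurable_ofReal.comp (hmAr n)).aemeasurable
      (ENNReal.measurable_ofReal.comp (hmΔ n)).aemeasurable
    simp only [Pi.mul_apply] at hH
    have hpp' : (p - 1) * p' = p := by
      have hne : p - 1 ≠ 0 := by linarith
      rw [hp'_def, mul_comm]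
      exact div_mul_cancel₀ p hne
    have e1 : ∀ x : E4, ENNReal.ofReal (|U n x| ^ (p - 1) * |U n x - u x|) =
        ENNReal.ofReal (|U n x| ^ (p - 1)) * ENNReal.ofReal (|U n x - u x|) :=
      fun x => ENNReal.ofReal_mul (by positivity)
    have e2 : ∀ x : E4, ENNReal.ofReal (|U n x| ^ (p - 1)) ^ p' =
        ENNReal.ofReal (|U n x| ^ p) := by
      intro x
      rw [ENNReal.ofReal_rpow_of_nonneg (by positivity) hp'0.le,
        ← Real.rpow_mul (abs_nonneg _), hpp']
    have e3 : ∀ x : E4, ENNReal.ofReal (|U n x - u x|) ^ p =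
        ENNReal.ofReal (|U n x - u x| ^ p) :=
      fun x => ENNReal.ofReal_rpow_of_nonneg (abs_nonneg _) hp0.le
    simp only [e2, e3] at hH
    calc (∫⁻ x : E4, ENNReal.ofReal (|U n x| ^ (p - 1) * |U n x - u x|))
        = ∫⁻ x : E4, ENNReal.ofReal (|U n x| ^ (p - 1)) *
            ENNReal.ofReal (|U n x - u x|) := by simp only [e1]
      _ ≤ (∫⁻ x : E4, ENNReal.ofReal (|U n x| ^ p)) ^ (1 / p') *
            (∫⁻ x : E4, ENNReal.ofReal (|U n x - u x| ^ p)) ^ (1 / p) := hH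
      _ ≤ (ENNReal.ofReal Cp * ENNReal.ofReal B) ^ (1 / p') *
            (∫⁻ x : E4, ENNReal.ofReal (|U n x - u x| ^ p)) ^ (1 / p) := by
          apply mul_le_mul_left
          exact ENNReal.rpow_le_rpow (hI1 n) (by positivity)
  have hBt : ∀ n, (∫⁻ x : E4, ENNReal.ofReal
        (|U n x| ^ (q - 1) * (Real.exp (α * |U n x| ^ s) - 1) * |U n x - u x|)) ≤
      (ENNReal.ofReal Cb * ENNReal.ofReal B) ^ (1 / ρ) *
        (∫⁻ x : E4, ENNReal.ofReal (|U n x - u x| ^ r₃)) ^ (1 / r₃) := by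
    intro n
    have hH := ENNReal.lintegral_mul_le_Lp_mul_Lq (volume : Measure E4) hρconj
      (f := fun x => ENNReal.ofReal
        (|U n x| ^ (q - 1) * (Real.exp (α * |U n x| ^ s) - 1)))
      (g := fun x => ENNReal.ofReal (|U n x - u x|))
      (ENNReal.measurable_ofReal.comp (hmBr n)).aemeasurable
      (ENNReal.measurable_ofReal.comp (hmΔ n)).aemeasurable
    simp only [Pi.mul_apply] at hH
    have e1 : ∀ x : E4, ENNReal.ofReal
        (|U n x| ^ (q - 1) * (Real.exp (α * |U n x| ^ s) - 1) * |U n x - u x|) =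
        ENNReal.ofReal (|U n x| ^ (q - 1) * (Real.exp (α * |U n x| ^ s) - 1)) *
          ENNReal.ofReal (|U n x - u x|) :=
      fun x => ENNReal.ofReal_mul (mul_nonneg (by positivity) (hE0 n x))
    have e2 : ∀ x : E4, ENNReal.ofReal
        (|U n x| ^ (q - 1) * (Real.exp (α * |U n x| ^ s) - 1)) ^ ρ =
        ENNReal.ofReal ((|U n x| ^ (q - 1) * (Real.exp (α * |U n x| ^ s) - 1)) ^ ρ) :=
      fun x => ENNReal.ofReal_rpow_of_nonneg
        (mul_nonneg (by positivity) (hE0 n x)) hρ0.le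
    have e3 : ∀ x : E4, ENNReal.ofReal (|U n x - u x|) ^ r₃ =
        ENNReal.ofReal (|U n x - u x| ^ r₃) :=
      fun x => ENNReal.ofReal_rpow_of_nonneg (abs_nonneg _) hr₃0.le
    simp only [e2, e3] at hH
    calc (∫⁻ x : E4, ENNReal.ofReal
          (|U n x| ^ (q - 1) * (Real.exp (α * |U n x| ^ s) - 1) * |U n x - u x|))
        = ∫⁻ x : E4,
            ENNReal.ofReal (|U n x| ^ (q - 1) * (Real.exp (α * |U n x| ^ s) - 1)) *
              ENNReal.ofReal (|U n x - u x|) := by simp only [e1]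
      _ ≤ (∫⁻ x : E4, ENNReal.ofReal
              ((|U n x| ^ (q - 1) * (Real.exp (α * |U n x| ^ s) - 1)) ^ ρ)) ^ (1 / ρ) *
            (∫⁻ x : E4, ENNReal.ofReal (|U n x - u x| ^ r₃)) ^ (1 / r₃) := hH
      _ ≤ (ENNReal.ofReal Cb * ENNReal.ofReal B) ^ (1 / ρ) *
            (∫⁻ x : E4, ENNReal.ofReal (|U n x - u x| ^ r₃)) ^ (1 / r₃) := by
          apply mul_le_mul_left
          exact ENNReal.rpow_le_rpow (hI2 n) (by positivity)
  -- key estimate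
  set K1 : ENNReal := (ENNReal.ofReal Cp * ENNReal.ofReal B) ^ (1 / p') with hK1_def
  set K2 : ENNReal := (ENNReal.ofReal Cb * ENNReal.ofReal B) ^ (1 / ρ) with hK2_def
  set L : ℕ → ENNReal :=
    fun n => ∫⁻ x : E4, ENNReal.ofReal ‖f (U n x) * (U n x - u x)‖ with hL_def
  have key : ∀ n, L n ≤ ENNReal.ofReal c₀ *
      (K1 * (∫⁻ x : E4, ENNReal.ofReal (|U n x - u x| ^ p)) ^ (1 / p) +
       K2 * (∫⁻ x : E4, ENNReal.ofReal (|U n x - u x| ^ r₃)) ^ (1 / r₃)) := by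
    intro n
    have hpt : ∀ x : E4, ENNReal.ofReal ‖f (U n x) * (U n x - u x)‖ ≤
        ENNReal.ofReal c₀ *
          (ENNReal.ofReal (|U n x| ^ (p - 1) * |U n x - u x|) +
           ENNReal.ofReal (|U n x| ^ (q - 1) * (Real.exp (α * |U n x| ^ s) - 1) *
             |U n x - u x|)) := by
      intro x
      rw [norm_mul, Real.norm_eq_abs, Real.norm_eq_abs]
      have h2 := mul_le_mul_of_nonneg_right (hfb (U n x)) (abs_nonneg (U n x - u x))
      have h3 : |f (U n x)| * |U n x - u x| ≤
          c₀ * (|U n x| ^ (p - 1) * |U n x - u x| +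
            |U n x| ^ (q - 1) * (Real.exp (α * |U n x| ^ s) - 1) * |U n x - u x|) := by
        calc |f (U n x)| * |U n x - u x| ≤
            c₀ * (|U n x| ^ (p - 1) + |U n x| ^ (q - 1) *
              (Real.exp (α * |U n x| ^ s) - 1)) * |U n x - u x| := h2
          _ = c₀ * (|U n x| ^ (p - 1) * |U n x - u x| +
              |U n x| ^ (q - 1) * (Real.exp (α * |U n x| ^ s) - 1) * |U n x - u x|) := by
            ring
      calc ENNReal.ofReal (|f (U n x)| * |U n x - u x|)
          ≤ ENNReal.ofReal (c₀ * (|U n x| ^ (p - 1) * |U n x - u x| +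
              |U n x| ^ (q - 1) * (Real.exp (α * |U n x| ^ s) - 1) * |U n x - u x|)) :=
            ENNReal.ofReal_le_ofReal h3
        _ = ENNReal.ofReal c₀ *
            (ENNReal.ofReal (|U n x| ^ (p - 1) * |U n x - u x|) +
             ENNReal.ofReal (|U n x| ^ (q - 1) * (Real.exp (α * |U n x| ^ s) - 1) *
               |U n x - u x|)) := by
            rw [ENNReal.ofReal_mul hc₀.le, ENNReal.ofReal_add (by positivity)
              (mul_nonneg (mul_nonneg (by positivity) (hE0 n x)) (abs_nonneg _))]
    calc L n ≤ ∫⁻ x : E4, ENNReal.ofReal c₀ *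
          (ENNReal.ofReal (|U n x| ^ (p - 1) * |U n x - u x|) +
           ENNReal.ofReal (|U n x| ^ (q - 1) * (Real.exp (α * |U n x| ^ s) - 1) *
             |U n x - u x|)) := lintegral_mono hpt
      _ = ENNReal.ofReal c₀ *
          ((∫⁻ x : E4, ENNReal.ofReal (|U n x| ^ (p - 1) * |U n x - u x|)) +
           ∫⁻ x : E4, ENNReal.ofReal (|U n x| ^ (q - 1) *
             (Real.exp (α * |U n x| ^ s) - 1) * |U n x - u x|)) := by
          rw [lintegral_const_mul' _ _ ENNReal.ofReal_ne_top, lintegral_add_left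
            (by exact ENNReal.measurable_ofReal.comp ((hmAr n).mul (hmΔ n)) :
              Measurable fun x : E4 => ENNReal.ofReal (|U n x| ^ (p - 1) * |U n x - u x|))]
      _ ≤ ENNReal.ofReal c₀ *
          (K1 * (∫⁻ x : E4, ENNReal.ofReal (|U n x - u x| ^ p)) ^ (1 / p) +
           K2 * (∫⁻ x : E4, ENNReal.ofReal (|U n x - u x| ^ r₃)) ^ (1 / r₃)) :=
          mul_le_mul_right (add_le_add (hA n) (hBt n)) _
  -- limits
  have hK1ne : K1 ≠ ⊤ := by
    rw [hK1_def]
    exact ENNReal.rpow_ne_top_of_nonneg (by positivity)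
      (ENNReal.mul_ne_top ENNReal.ofReal_ne_top ENNReal.ofReal_ne_top)
  have hK2ne : K2 ≠ ⊤ := by
    rw [hK2_def]
    exact ENNReal.rpow_ne_top_of_nonneg (by positivity)
      (ENNReal.mul_ne_top ENNReal.ofReal_ne_top ENNReal.ofReal_ne_top)
  have ht1 : Tendsto (fun n => K1 *
      (∫⁻ x : E4, ENNReal.ofReal (|U n x - u x| ^ p)) ^ (1 / p)) atTop (nhds 0) := by
    have := (ENNReal.tendsto_const_mul_rpow_nhds_zero_of_pos hK1ne
      (by positivity : (0:ℝ) < 1 / p)).comp hconvp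
    simpa [Function.comp_def] using this
  have ht2 : Tendsto (fun n => K2 *
      (∫⁻ x : E4, ENNReal.ofReal (|U n x - u x| ^ r₃)) ^ (1 / r₃)) atTop (nhds 0) := by
    have := (ENNReal.tendsto_const_mul_rpow_nhds_zero_of_pos hK2ne
      (by positivity : (0:ℝ) < 1 / r₃)).comp hconvr3
    simpa [Function.comp_def] using this
  have hsum := ht1.add ht2
  rw [add_zero] at hsum
  have hmul := ENNReal.Tendsto.const_mul hsum (Or.inr ENNReal.ofReal_ne_top)
    (a := ENNReal.ofReal c₀)
  rw [mul_zero] at hmul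
  have hL0 : Tendsto L atTop (nhds 0) :=
    tendsto_of_tendsto_of_tendsto_of_le_of_le tendsto_const_nhds hmul
      (fun n => zero_le) key
  have htr : Tendsto (fun n => (L n).toReal) atTop (nhds 0) := by
    have := (ENNReal.tendsto_toReal (by simp : (0:ENNReal) ≠ ⊤)).comp hL0
    simpa [Function.comp_def] using this
  exact squeeze_zero_norm (fun n => norm_integral_le_lintegral_norm _) htr



end
end
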